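/- Let I be a nonempty finite set of nonnegative integers with m = max(I), and let I⁻ = I \ {m}. Then for n > m, the number of signed permutations in the hyperoctahedral group B_n with descent set exactly I satisfies d_B(I;n) = C(n,m)·2^{n−m}·d_B(I⁻;m) − d_B(I⁻;n). -/

import Mathlib

/-- The descent set of a permutation of `Fin n`, with positions 1-indexed:
`i ∈ descSet n π` iff `1 ≤ i ≤ n-1` and `π_i > π_{i+1}` (1-indexed entries). -/
def descSet (n : ℕ) (π : Equiv.Perm (Fin n)) : Finset ℕ :=
  (Finset.range n).filter fun i =>
    ∃ h : 0 < i ∧ i < n, π ⟨i, h.2⟩ < π ⟨i - 1, by omega⟩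

/-- `dA I n` is the number of permutations in `S_n` with descent set exactly `I`. -/
def dA (I : Finset ℕ) (n : ℕ) : ℕ :=
  (Finset.univ.filter fun π : Equiv.Perm (Fin n) => descSet n π = I).card

/-- A signed permutation of `[n]` is encoded as a pair `(π, ε)`: the entry in
(1-indexed) position `i` is `π_i` with sign `−` iff `ε` is true there.
`signedVal n π ε i` is that entry `β_i ∈ {±1,…,±n}` for `1 ≤ i ≤ n`, and `0`
otherwise (so in particular `β₀ = 0`). -/
def signedVal (n : ℕ) (π : Equiv.Perm (Fin n)) (ε : Fin n → Bool) (i : ℕ) : ℤ :=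
  if h : 1 ≤ i ∧ i ≤ n then
    (if ε ⟨i - 1, by omega⟩ then -(((π ⟨i - 1, by omega⟩ : ℕ) : ℤ) + 1)
     else ((π ⟨i - 1, by omega⟩ : ℕ) : ℤ) + 1)
  else 0

/-- The type `B` descent set `Des β = {i ≥ 0 : β_i > β_{i+1}} ⊆ {0,…,n−1}`,
with the convention `β₀ = 0`. -/
def descSetB (n : ℕ) (π : Equiv.Perm (Fin n)) (ε : Fin n → Bool) : Finset ℕ :=
  (Finset.range n).filter fun i => signedVal n π ε (i + 1) < signedVal n π ε i

/-- `dB I n` is the number of signed permutations in the hyperoctahedral group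
`B_n` with descent set exactly `I`. -/
def dB (I : Finset ℕ) (n : ℕ) : ℕ :=
  (Finset.univ.filter fun βε : Equiv.Perm (Fin n) × (Fin n → Bool) =>
    descSetB n βε.1 βε.2 = I).card

/-- `dD I n` is the number of elements of the type `D` Coxeter group `D_n`
(signed permutations with an even number of negative entries) with descent set
exactly `I`. -/
def dD (I : Finset ℕ) (n : ℕ) : ℕ :=
  (Finset.univ.filter fun βε : Equiv.Perm (Fin n) × (Fin n → Bool) =>
    descSetB n βε.1 βε.2 = I ∧
      Even (Finset.univ.filter fun i => βε.2 i = true).card).card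

namespace SP

def sval (x : ℕ) (s : Bool) : ℤ := if s then -((x:ℤ)+1) else (x:ℤ)+1

lemma sval_lt_zero_iff (x : ℕ) (s : Bool) : sval x s < 0 ↔ s = true := by
  cases s <;> simp [sval] <;> omega

lemma sval_inj {x y : ℕ} {s t : Bool} (h : sval x s = sval y t) : x = y ∧ s = t := by
  cases s <;> cases t <;> simp [sval] at h ⊢ <;> omega

lemma sval_lt_sval_iff {x y x' y' : ℕ} {s t : Bool}
    (h1 : x < y ↔ x' < y') (h2 : y < x ↔ y' < x') :
    (sval x s < sval y t) ↔ (sval x' s < sval y' t) := by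
  cases s <;> cases t <;> simp [sval] <;> omega

variable {n : ℕ} (π : Equiv.Perm (Fin n)) (ε : Fin n → Bool)

lemma signedVal_eq (i : ℕ) (h : i < n) :
    signedVal n π ε (i + 1) = sval (π ⟨i, h⟩) (ε ⟨i, h⟩) := by
  have h' : 1 ≤ i + 1 ∧ i + 1 ≤ n := by omega
  rw [signedVal, dif_pos h']
  rfl

lemma signedVal_zero : signedVal n π ε 0 = 0 := by
  rw [signedVal, dif_neg]; omega

lemma mem_descSetB_zero (hn : 0 < n) :
    0 ∈ descSetB n π ε ↔ ε ⟨0, hn⟩ = true := by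
  rw [descSetB, Finset.mem_filter, Finset.mem_range, signedVal_zero,
    signedVal_eq π ε 0 hn, sval_lt_zero_iff]
  tauto

lemma mem_descSetB_succ (i : ℕ) (h : i + 1 < n) :
    (i + 1) ∈ descSetB n π ε ↔
      sval (π ⟨i+1, h⟩) (ε ⟨i+1, h⟩) < sval (π ⟨i, by omega⟩) (ε ⟨i, by omega⟩) := by
  rw [descSetB, Finset.mem_filter, Finset.mem_range,
    signedVal_eq π ε (i+1) h, signedVal_eq π ε i (by omega)]
  tauto

lemma not_mem_descSetB_of_ge (i : ℕ) (h : n ≤ i) : i ∉ descSetB n π ε := by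
  rw [descSetB, Finset.mem_filter, Finset.mem_range]
  omega

end SP

namespace SP2
open SP

variable {n m : ℕ}

def headSet (hmn : m ≤ n) (π : Equiv.Perm (Fin n)) : Finset (Fin n) :=
  Finset.image (fun i : Fin m => π (Fin.castLE hmn i)) Finset.univ

lemma mem_headSet {hmn : m ≤ n} {π} {a : Fin n} :
    a ∈ headSet hmn π ↔ ∃ i : Fin m, π (Fin.castLE hmn i) = a := by
  simp [headSet]

lemma card_headSet (hmn : m ≤ n) (π) : (headSet hmn π).card = m := by
  rw [headSet, Finset.card_image_of_injective _
    (fun a b h => Fin.castLE_injective hmn (π.injective h)), Finset.card_univ, Fintype.card_fin]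

/-- key for sorting the tail: the signed value of a value `a` -/
def key (σ : Fin n → Bool) (a : Fin n) : ℤ := sval a (σ a)

lemma key_inj (σ : Fin n → Bool) : Function.Injective (key σ) := by
  intro a b h
  exact Fin.val_injective (sval_inj h).1

abbrev keyr (σ : Fin n → Bool) (a b : Fin n) : Prop := key σ a ≤ key σ b

instance (σ : Fin n → Bool) : IsTrans (Fin n) (keyr σ) := ⟨fun _ _ _ => le_trans⟩
instance (σ : Fin n → Bool) : IsAntisymm (Fin n) (keyr σ) :=
  ⟨fun _ _ hab hba => key_inj σ (le_antisymm hab hba)⟩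
instance (σ : Fin n → Bool) : IsTotal (Fin n) (keyr σ) := ⟨fun _ _ => le_total _ _⟩

def tailList (A : Finset (Fin n)) (σ : Fin n → Bool) : List (Fin n) :=
  Finset.sort Aᶜ (keyr σ)

lemma tailList_sorted (A : Finset (Fin n)) (σ) : List.Pairwise (keyr σ) (tailList A σ) :=
  Finset.pairwise_sort _ _

lemma tailList_nodup (A : Finset (Fin n)) (σ) : (tailList A σ).Nodup :=
  Finset.sort_nodup _ _

lemma mem_tailList {A : Finset (Fin n)} {σ} {a : Fin n} :
    a ∈ tailList A σ ↔ a ∉ A := by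
  rw [tailList]
  rw [Finset.mem_sort]
  exact Finset.mem_compl

lemma tailList_length (A : Finset (Fin n)) (σ) (hA : A.card = m) :
    (tailList A σ).length = n - m := by
  rw [tailList]
  rw [Finset.length_sort, Finset.card_compl, Fintype.card_fin, hA]

end SP2

namespace SP3
open SP SP2

variable {n m : ℕ}

noncomputable def stdPerm (hmn : m ≤ n) (π : Equiv.Perm (Fin n)) : Equiv.Perm (Fin m) :=
  Equiv.ofBijective
    (fun i => ((headSet hmn π).orderIsoOfFin (card_headSet hmn π)).symm
      ⟨π (Fin.castLE hmn i), mem_headSet.mpr ⟨i, rfl⟩⟩)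
    (by
      rw [Fintype.bijective_iff_injective_and_card]
      refine ⟨fun a b h => ?_, rfl⟩
      have h2 := ((headSet hmn π).orderIsoOfFin (card_headSet hmn π)).symm.toEquiv.injective h
      rw [Subtype.mk.injEq] at h2
      exact Fin.castLE_injective hmn (π.injective h2))

lemma stdPerm_spec (hmn : m ≤ n) (π : Equiv.Perm (Fin n)) (i : Fin m) :
    (((headSet hmn π).orderIsoOfFin (card_headSet hmn π)) (stdPerm hmn π i) : Fin n)
      = π (Fin.castLE hmn i) := by
  rw [stdPerm, Equiv.ofBijective_apply, OrderIso.apply_symm_apply]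

noncomputable def Fmap (hmn : m ≤ n) (βε : Equiv.Perm (Fin n) × (Fin n → Bool)) :
    (Finset (Fin n) × (Fin n → Bool)) × (Equiv.Perm (Fin m) × (Fin m → Bool)) :=
  ((headSet hmn βε.1,
    fun a => if a ∈ headSet hmn βε.1 then false else βε.2 (βε.1.symm a)),
   (stdPerm hmn βε.1, fun i => βε.2 (Fin.castLE hmn i)))

def gfun (hmn : m ≤ n) (A : Finset (Fin n)) (hA : A.card = m) (σ : Fin n → Bool)
    (π' : Equiv.Perm (Fin m)) : Fin n → Fin n :=
  fun j => if h : (j : ℕ) < m then ((A.orderIsoOfFin hA) (π' ⟨j, h⟩) : Fin n)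
    else (tailList A σ).get ⟨(j : ℕ) - m, by rw [tailList_length A σ hA]; omega⟩

lemma gfun_inj (hmn : m ≤ n) (A : Finset (Fin n)) (hA : A.card = m) (σ : Fin n → Bool)
    (π' : Equiv.Perm (Fin m)) : Function.Injective (gfun hmn A hA σ π') := by
  intro j1 j2 h
  by_cases h1 : (j1 : ℕ) < m <;> by_cases h2 : (j2 : ℕ) < m <;>
    simp only [gfun, h1, h2, dif_pos, dif_neg, not_false_iff] at h
  · have := (A.orderIsoOfFin hA).toEquiv.injective (Subtype.coe_injective h)
    have := π'.injective this
    exact Fin.ext (by simpa [Fin.mk.injEq] using congrArg Fin.val this)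
  · exfalso
    have hm1 : ((A.orderIsoOfFin hA) (π' ⟨j1, h1⟩) : Fin n) ∈ A :=
      ((A.orderIsoOfFin hA) (π' ⟨j1, h1⟩)).2
    rw [h] at hm1
    exact (mem_tailList.mp (List.get_mem _ _)) hm1
  · exfalso
    have hm1 : ((A.orderIsoOfFin hA) (π' ⟨j2, h2⟩) : Fin n) ∈ A :=
      ((A.orderIsoOfFin hA) (π' ⟨j2, h2⟩)).2
    rw [← h] at hm1
    exact (mem_tailList.mp (List.get_mem _ _)) hm1
  · have := (List.Nodup.get_inj_iff (tailList_nodup A σ)).mp h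
    rw [Fin.mk.injEq] at this
    exact Fin.ext (by omega)

def Geps (hmn : m ≤ n) (A : Finset (Fin n)) (hA : A.card = m)
    (σ : Fin n → Bool) (ε' : Fin m → Bool) : Fin n → Bool :=
  fun j => if h : (j : ℕ) < m then ε' ⟨j, h⟩
    else σ ((tailList A σ).get ⟨(j : ℕ) - m, by rw [tailList_length A σ hA]; omega⟩)

noncomputable def Gmap (hmn : m ≤ n) (A : Finset (Fin n)) (hA : A.card = m)
    (σ : Fin n → Bool) (π' : Equiv.Perm (Fin m)) (ε' : Fin m → Bool) :
    Equiv.Perm (Fin n) × (Fin n → Bool) :=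
  (Equiv.ofBijective (gfun hmn A hA σ π')
    ((Fintype.bijective_iff_injective_and_card _).mpr ⟨gfun_inj hmn A hA σ π', rfl⟩),
   Geps hmn A hA σ ε')

variable {hmn : m ≤ n} {A : Finset (Fin n)} {hA : A.card = m} {σ : Fin n → Bool}
  {π' : Equiv.Perm (Fin m)} {ε' : Fin m → Bool}

lemma gfun_lt (j : Fin n) (h : (j : ℕ) < m) :
    gfun hmn A hA σ π' j = ((A.orderIsoOfFin hA) (π' ⟨j, h⟩) : Fin n) := dif_pos h

lemma gfun_ge (j : Fin n) (h : ¬ (j : ℕ) < m) :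
    gfun hmn A hA σ π' j =
      (tailList A σ).get ⟨(j : ℕ) - m, by rw [tailList_length A σ hA]; omega⟩ := dif_neg h

lemma Geps_lt (j : Fin n) (h : (j : ℕ) < m) :
    Geps hmn A hA σ ε' j = ε' ⟨j, h⟩ := dif_pos h

lemma Geps_ge (j : Fin n) (h : ¬ (j : ℕ) < m) :
    Geps hmn A hA σ ε' j =
      σ ((tailList A σ).get ⟨(j : ℕ) - m, by rw [tailList_length A σ hA]; omega⟩) := dif_neg h

lemma Gmap_fst_apply (j : Fin n) :
    (Gmap hmn A hA σ π' ε').1 j = gfun hmn A hA σ π' j := rfl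

lemma Gmap_snd : (Gmap hmn A hA σ π' ε').2 = Geps hmn A hA σ ε' := rfl

end SP3

namespace SP4
open SP SP2 SP3

variable {n m : ℕ}

lemma e_lt_iff (A : Finset (Fin n)) (hA : A.card = m) (x y : Fin m) :
    ((A.orderIsoOfFin hA x : Fin n) : ℕ) < ((A.orderIsoOfFin hA y : Fin n) : ℕ) ↔
      (x : ℕ) < (y : ℕ) := by
  rw [← Fin.lt_def, Subtype.coe_lt_coe, OrderIso.lt_iff_lt, Fin.lt_def]

lemma head_lt_iff (hmn : m ≤ n) (π : Equiv.Perm (Fin n)) (a b : Fin m) :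
    ((π (Fin.castLE hmn a) : Fin n) : ℕ) < ((π (Fin.castLE hmn b) : Fin n) : ℕ) ↔
      ((stdPerm hmn π a : Fin m) : ℕ) < ((stdPerm hmn π b : Fin m) : ℕ) := by
  rw [← stdPerm_spec hmn π a, ← stdPerm_spec hmn π b]
  exact e_lt_iff _ _ _ _

lemma mem_descSetB_stdPerm_iff (hmn : m ≤ n) (π : Equiv.Perm (Fin n)) (ε : Fin n → Bool)
    (i : ℕ) (him : i < m) :
    i ∈ descSetB m (stdPerm hmn π) (fun k => ε (Fin.castLE hmn k)) ↔ i ∈ descSetB n π ε := by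
  match i with
  | 0 =>
    rw [mem_descSetB_zero _ _ him, mem_descSetB_zero _ _ (lt_of_lt_of_le him hmn)]
    rfl
  | (k+1) =>
    rw [mem_descSetB_succ _ _ k him, mem_descSetB_succ _ _ k (by omega)]
    exact (sval_lt_sval_iff
      (head_lt_iff hmn π ⟨k+1, him⟩ ⟨k, by omega⟩)
      (head_lt_iff hmn π ⟨k, by omega⟩ ⟨k+1, him⟩)).symm

variable {hmn : m ≤ n} {A : Finset (Fin n)} {hA : A.card = m} {σ : Fin n → Bool}
  {π' : Equiv.Perm (Fin m)} {ε' : Fin m → Bool}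

lemma mem_descSetB_Gmap_lt (i : ℕ) (him : i < m) :
    i ∈ descSetB n (Gmap hmn A hA σ π' ε').1 (Gmap hmn A hA σ π' ε').2 ↔
      i ∈ descSetB m π' ε' := by
  match i with
  | 0 =>
    rw [mem_descSetB_zero _ _ (lt_of_lt_of_le him hmn), mem_descSetB_zero _ _ him,
      Gmap_snd, Geps_lt _ him]
  | (k+1) =>
    rw [mem_descSetB_succ _ _ k (by omega), mem_descSetB_succ _ _ k him,
      Gmap_fst_apply, Gmap_fst_apply, Gmap_snd,
      gfun_lt _ him, gfun_lt _ (show k < m by omega),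
      Geps_lt _ him, Geps_lt _ (show k < m by omega)]
    exact sval_lt_sval_iff
      (e_lt_iff A hA (π' ⟨k+1, him⟩) (π' ⟨k, by omega⟩))
      (e_lt_iff A hA (π' ⟨k, by omega⟩) (π' ⟨k+1, him⟩))

lemma not_mem_descSetB_Gmap_gt (i : ℕ) (hmi : m < i) (hin : i < n) :
    i ∉ descSetB n (Gmap hmn A hA σ π' ε').1 (Gmap hmn A hA σ π' ε').2 := by
  match i, hmi with
  | (k+1), hmi =>
    have hkm : ¬ (k : ℕ) < m := by omega
    have hkm1 : ¬ (k+1 : ℕ) < m := by omega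
    rw [mem_descSetB_succ _ _ k hin, Gmap_fst_apply, Gmap_fst_apply, Gmap_snd,
      gfun_ge _ hkm1, gfun_ge _ hkm, Geps_ge _ hkm1, Geps_ge _ hkm]
    push_neg
    exact (tailList_sorted A σ).rel_get_of_lt (by simp only [Fin.mk_lt_mk]; omega)

end SP4

namespace SP5
open SP SP2 SP3 SP4

variable {n m : ℕ}

/-- the sign-by-value function produced by `Fmap` -/
def Fsig (hmn : m ≤ n) (π : Equiv.Perm (Fin n)) (ε : Fin n → Bool) : Fin n → Bool :=
  fun a => if a ∈ headSet hmn π then false else ε (π.symm a)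

lemma Fmap_eq (hmn : m ≤ n) (π : Equiv.Perm (Fin n)) (ε : Fin n → Bool) :
    Fmap hmn (π, ε) = ((headSet hmn π, Fsig hmn π ε),
      (stdPerm hmn π, fun i => ε (Fin.castLE hmn i))) := rfl

lemma mem_headSet_iff {hmn : m ≤ n} {π : Equiv.Perm (Fin n)} {a : Fin n} :
    a ∈ headSet hmn π ↔ ((π.symm a : Fin n) : ℕ) < m := by
  rw [mem_headSet]
  constructor
  · rintro ⟨i, rfl⟩
    rw [Equiv.symm_apply_apply]
    exact i.isLt
  · intro h
    exact ⟨⟨(π.symm a : Fin n), h⟩, by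
      rw [show Fin.castLE hmn ⟨((π.symm a : Fin n) : ℕ), h⟩ = π.symm a from Fin.ext rfl,
        Equiv.apply_symm_apply]⟩

lemma Fsig_tail {hmn : m ≤ n} {π : Equiv.Perm (Fin n)} {ε : Fin n → Bool}
    (j : Fin n) (hj : ¬ (j : ℕ) < m) : Fsig hmn π ε (π j) = ε j := by
  rw [Fsig, if_neg, Equiv.symm_apply_apply]
  rw [mem_headSet_iff, Equiv.symm_apply_apply]
  exact hj

/-- the tail of the permutation, read off in position order -/
def tailFn (hmn : m ≤ n) (π : Equiv.Perm (Fin n)) : Fin (n - m) → Fin n :=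
  fun k => π ⟨m + (k : ℕ), by omega⟩

lemma tailFn_inj (hmn : m ≤ n) (π : Equiv.Perm (Fin n)) : Function.Injective (tailFn hmn π) := by
  intro a b h
  have := π.injective h
  rw [Fin.mk.injEq] at this
  exact Fin.ext (by omega)

lemma sval_tail_mono (hmn : m ≤ n) (π : Equiv.Perm (Fin n)) (ε : Fin n → Bool)
    (htail : ∀ i, m < i → i < n → i ∉ descSetB n π ε) :
    ∀ (j : ℕ) (d : ℕ) (h1 : m ≤ j) (h2 : j + d < n),
      sval ((π ⟨j, by omega⟩ : Fin n) : ℕ) (ε ⟨j, by omega⟩) ≤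
        sval ((π ⟨j + d, h2⟩ : Fin n) : ℕ) (ε ⟨j + d, h2⟩) := by
  intro j d
  induction d with
  | zero => intro h1 h2; exact le_refl _
  | succ d ih =>
    intro h1 h2
    refine le_trans (ih h1 (by omega)) ?_
    have hnd := htail (j + d + 1) (by omega) h2
    rw [mem_descSetB_succ _ _ (j + d) h2] at hnd
    exact le_of_not_gt hnd

lemma tailList_eq (hmn : m ≤ n) (π : Equiv.Perm (Fin n)) (ε : Fin n → Bool)
    (htail : ∀ i, m < i → i < n → i ∉ descSetB n π ε) :
    tailList (headSet hmn π) (Fsig hmn π ε) = List.ofFn (tailFn hmn π) := by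
  refine (fun hp hs => List.Perm.eq_of_pairwise' (r := keyr (Fsig hmn π ε)) (tailList_sorted _ _) hs hp) ?_ ?_
  · refine List.perm_of_nodup_nodup_toFinset_eq (tailList_nodup _ _)
      (List.nodup_ofFn.mpr (tailFn_inj hmn π)) ?_
    ext a
    rw [List.mem_toFinset, List.mem_toFinset, mem_tailList, mem_headSet_iff,
      List.mem_ofFn]
    constructor
    · intro h
      refine ⟨⟨((π.symm a : Fin n) : ℕ) - m, by omega⟩, ?_⟩
      rw [tailFn]
      rw [show (⟨m + (((π.symm a : Fin n) : ℕ) - m), by omega⟩ : Fin n) = π.symm a from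
        Fin.ext (by simp; omega), Equiv.apply_symm_apply]
    · rintro ⟨k, rfl⟩
      rw [tailFn, Equiv.symm_apply_apply]
      simp
  · rw [List.pairwise_ofFn]
    intro k1 k2 hk
    show key (Fsig hmn π ε) (tailFn hmn π k1) ≤ key (Fsig hmn π ε) (tailFn hmn π k2)
    rw [key, key, tailFn, tailFn, Fsig_tail _ (by simp), Fsig_tail _ (by simp)]
    have hk' : (k1 : ℕ) < (k2 : ℕ) := hk
    have h2 : m + (k1 : ℕ) + ((k2 : ℕ) - (k1 : ℕ)) < n := by omega
    have := sval_tail_mono hmn π ε htail (m + (k1 : ℕ)) ((k2 : ℕ) - (k1 : ℕ)) (by omega) h2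
    have heq : m + (k1 : ℕ) + ((k2 : ℕ) - (k1 : ℕ)) = m + (k2 : ℕ) := by omega
    have hfin : (⟨m + (k1 : ℕ) + ((k2 : ℕ) - (k1 : ℕ)), h2⟩ : Fin n) =
        ⟨m + (k2 : ℕ), heq ▸ h2⟩ := Fin.ext heq
    rw [hfin] at this
    exact this

lemma GF_eq (hmn : m ≤ n) (π : Equiv.Perm (Fin n)) (ε : Fin n → Bool)
    (htail : ∀ i, m < i → i < n → i ∉ descSetB n π ε) :
    Gmap hmn (headSet hmn π) (card_headSet hmn π) (Fsig hmn π ε) (stdPerm hmn π)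
      (fun i => ε (Fin.castLE hmn i)) = (π, ε) := by
  have hL := tailList_eq hmn π ε htail
  have hlen : (tailList (headSet hmn π) (Fsig hmn π ε)).length = n - m :=
    tailList_length _ _ (card_headSet hmn π)
  have hget : ∀ (j : Fin n) (hj : ¬ (j : ℕ) < m),
      (tailList (headSet hmn π) (Fsig hmn π ε)).get ⟨(j : ℕ) - m, by omega⟩ = π j := by
    intro j hj
    have h1 : ((j : ℕ) - m) < (List.ofFn (tailFn hmn π)).length := by
      rw [List.length_ofFn]; omega
    rw [List.get_of_eq hL ⟨(j : ℕ) - m, by omega⟩]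
    rw [List.get_ofFn]
    rw [tailFn]
    exact congrArg π (Fin.ext (by simp; omega))
  refine Prod.ext ?_ ?_
  · apply Equiv.ext
    intro j
    rw [Gmap_fst_apply]
    by_cases hj : (j : ℕ) < m
    · rw [gfun_lt _ hj, stdPerm_spec]
      exact congrArg π (Fin.ext rfl)
    · rw [gfun_ge _ hj]
      exact hget j hj
  · funext j
    show Geps hmn (headSet hmn π) (card_headSet hmn π) (Fsig hmn π ε)
      (fun i => ε (Fin.castLE hmn i)) j = ε j
    by_cases hj : (j : ℕ) < m
    · rw [Geps_lt _ hj]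
      rfl
    · rw [Geps_ge _ hj, hget j hj, Fsig_tail _ hj]

end SP5

namespace SP6
open SP SP2 SP3 SP4 SP5

variable {n m : ℕ}

lemma orderIsoOfFin_congr {A B : Finset (Fin n)} (h : A = B) (hA : A.card = m)
    (hB : B.card = m) (i : Fin m) :
    ((A.orderIsoOfFin hA i : Fin n)) = (B.orderIsoOfFin hB i : Fin n) := by
  subst h; rfl

variable (hmn : m ≤ n) (A : Finset (Fin n)) (hA : A.card = m) (σ : Fin n → Bool)
  (π' : Equiv.Perm (Fin m)) (ε' : Fin m → Bool)

lemma headSet_Gmap : headSet hmn (Gmap hmn A hA σ π' ε').1 = A := by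
  apply Finset.eq_of_subset_of_card_le
  · intro a ha
    rw [mem_headSet] at ha
    obtain ⟨i, rfl⟩ := ha
    rw [Gmap_fst_apply, gfun_lt _ (show ((Fin.castLE hmn i : Fin n) : ℕ) < m from i.isLt)]
    exact ((A.orderIsoOfFin hA) _).2
  · rw [card_headSet, hA]

lemma FG_eq (hσ : ∀ a ∈ A, σ a = false) :
    Fmap hmn (Gmap hmn A hA σ π' ε') = ((A, σ), (π', ε')) := by
  have hhead := headSet_Gmap hmn A hA σ π' ε'
  have hlen : (tailList A σ).length = n - m := tailList_length A σ hA
  refine Prod.ext (Prod.ext ?_ ?_) (Prod.ext ?_ ?_)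
  · exact hhead
  · show Fsig hmn (Gmap hmn A hA σ π' ε').1 (Gmap hmn A hA σ π' ε').2 = σ
    funext a
    rw [Fsig, hhead]
    by_cases haA : a ∈ A
    · rw [if_pos haA, (hσ a haA)]
    · rw [if_neg haA]
      obtain ⟨k, hk⟩ := List.mem_iff_get.mp (mem_tailList.mpr haA)
      have hkn : (k : ℕ) < n - m := by rw [← hlen]; exact k.isLt
      set j : Fin n := ⟨m + (k : ℕ), by omega⟩ with hj
      have hjm : ¬ (j : ℕ) < m := by simp [hj]
      have hgj : (Gmap hmn A hA σ π' ε').1 j = a := by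
        rw [Gmap_fst_apply, gfun_ge _ hjm, ← hk]
        exact congrArg _ (Fin.ext (by simp [hj]))
      have hsymm : (Gmap hmn A hA σ π' ε').1.symm a = j := by
        rw [Equiv.symm_apply_eq, hgj]
      rw [hsymm]
      show Geps hmn A hA σ ε' j = σ a
      rw [Geps_ge _ hjm, ← hk]
      exact congrArg σ (congrArg _ (Fin.ext (by simp [hj])))
  · show stdPerm hmn (Gmap hmn A hA σ π' ε').1 = π'
    apply Equiv.ext
    intro i
    have h1 := stdPerm_spec hmn (Gmap hmn A hA σ π' ε').1 i
    rw [orderIsoOfFin_congr hhead (card_headSet hmn _) hA] at h1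
    rw [Gmap_fst_apply, gfun_lt _ (show ((Fin.castLE hmn i : Fin n) : ℕ) < m from i.isLt)]
      at h1
    have h2 : (⟨((Fin.castLE hmn i : Fin n) : ℕ), i.isLt⟩ : Fin m) = i := Fin.ext rfl
    rw [h2] at h1
    exact (A.orderIsoOfFin hA).toEquiv.injective (Subtype.coe_injective h1)
  · show (fun i => (Gmap hmn A hA σ π' ε').2 (Fin.castLE hmn i)) = ε'
    funext i
    show Geps hmn A hA σ ε' (Fin.castLE hmn i) = ε' i
    rw [Geps_lt _ (show ((Fin.castLE hmn i : Fin n) : ℕ) < m from i.isLt)]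
    exact congrArg ε' (Fin.ext rfl)

end SP6
namespace SP7
open SP SP2 SP3 SP4 SP5 SP6

variable {n m : ℕ}

lemma descSetB_eq_iff {p : ℕ} (π : Equiv.Perm (Fin p)) (ε : Fin p → Bool)
    (I' : Finset ℕ) (hI' : ∀ i ∈ I', i < p) :
    descSetB p π ε = I' ↔ ∀ i < p, (i ∈ descSetB p π ε ↔ i ∈ I') := by
  constructor
  · intro h i _; rw [h]
  · intro h
    ext i
    by_cases hip : i < p
    · exact h i hip
    · constructor
      · intro hi; exact absurd hi (not_mem_descSetB_of_ge _ _ _ (by omega))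
      · intro hi; exact absurd (hI' i hi) hip

lemma src_iff (hmn : m < n) (I' : Finset ℕ) (hI' : ∀ i ∈ I', i < m)
    (π : Equiv.Perm (Fin n)) (ε : Fin n → Bool) :
    (descSetB n π ε = insert m I' ∨ descSetB n π ε = I') ↔
      ((∀ i < m, (i ∈ descSetB n π ε ↔ i ∈ I')) ∧
        (∀ i, m < i → i < n → i ∉ descSetB n π ε)) := by
  constructor
  · rintro (h | h) <;> rw [h] <;> constructor
    · intro i him
      simp only [Finset.mem_insert]
      constructor
      · rintro (rfl | hi); · omega
        · exact hi
      · exact fun hi => Or.inr hi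
    · intro i hmi _ hi
      rw [Finset.mem_insert] at hi
      rcases hi with rfl | hi; · omega
      · exact absurd (hI' i hi) (by omega)
    · exact fun i _ => Iff.rfl
    · exact fun i hmi _ hi => absurd (hI' i hi) (by omega)
  · rintro ⟨h1, h2⟩
    by_cases hm : m ∈ descSetB n π ε
    · left
      ext i
      rcases lt_trichotomy i m with h | rfl | h
      · rw [Finset.mem_insert, h1 i h]
        constructor
        · exact fun hi => Or.inr hi
        · rintro (rfl | hi); · omega
          · exact hi
      · simp [hm]
      · by_cases hin : i < n
        · simp only [Finset.mem_insert]
          constructor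
          · exact fun hi => absurd hi (h2 i h hin)
          · rintro (rfl | hi); · omega
            · exact absurd (hI' i hi) (by omega)
        · constructor
          · exact fun hi => absurd hi (not_mem_descSetB_of_ge _ _ _ (by omega))
          · intro hi
            rcases Finset.mem_insert.mp hi with heq | hi
            · omega
            · exact absurd (hI' i hi) (by omega)
    · right
      ext i
      rcases lt_trichotomy i m with h | heq | h
      · exact h1 i h
      · constructor
        · intro hi; rw [heq] at hi; exact absurd hi hm
        · intro hi; exact absurd (hI' i hi) (by omega)
      · by_cases hin : i < n
        · constructor
          · intro hi; exact absurd hi (h2 i h hin)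
          · intro hi; exact absurd (hI' i hi) (by omega)
        · constructor
          · intro hi; exact absurd hi (not_mem_descSetB_of_ge _ _ _ (by omega))
          · intro hi; exact absurd (hI' i hi) (by omega)

lemma card_pairs (hmn : m ≤ n) :
    ((Finset.univ : Finset (Finset (Fin n) × (Fin n → Bool))).filter fun Aσ =>
      Aσ.1.card = m ∧ ∀ a ∈ Aσ.1, Aσ.2 a = false).card = n.choose m * 2 ^ (n - m) := by
  classical
  rw [Finset.card_eq_sum_card_fiberwise
    (f := Prod.fst) (t := Finset.univ.filter fun A : Finset (Fin n) => A.card = m)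
    (fun x hx => by
      rw [Finset.mem_coe, Finset.mem_filter] at hx ⊢
      exact ⟨Finset.mem_univ _, hx.2.1⟩)]
  have hfib : ∀ A ∈ (Finset.univ.filter fun A : Finset (Fin n) => A.card = m),
      ((Finset.univ.filter fun Aσ : Finset (Fin n) × (Fin n → Bool) =>
        Aσ.1.card = m ∧ ∀ a ∈ Aσ.1, Aσ.2 a = false).filter fun x => x.1 = A).card
        = 2 ^ (n - m) := by
    intro A hA
    rw [Finset.mem_filter] at hA
    have : ((Finset.univ.filter fun Aσ : Finset (Fin n) × (Fin n → Bool) =>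
        Aσ.1.card = m ∧ ∀ a ∈ Aσ.1, Aσ.2 a = false).filter fun x => x.1 = A)
        = {A} ×ˢ (Fintype.piFinset fun i : Fin n =>
            if i ∈ A then ({false} : Finset Bool) else Finset.univ) := by
      ext ⟨B, σ⟩
      simp only [Finset.mem_filter, Finset.mem_univ, true_and, Finset.mem_product,
        Finset.mem_singleton, Fintype.mem_piFinset]
      constructor
      · rintro ⟨⟨hB, hσ⟩, rfl⟩
        refine ⟨rfl, fun i => ?_⟩
        by_cases hiA : i ∈ B
        · rw [if_pos hiA, Finset.mem_singleton]
          exact hσ i hiA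
        · rw [if_neg hiA]
          exact Finset.mem_univ _
      · rintro ⟨rfl, hσ⟩
        refine ⟨⟨hA.2, fun a ha => ?_⟩, rfl⟩
        have := hσ a
        rw [if_pos ha, Finset.mem_singleton] at this
        exact this
    rw [this, Finset.card_product, Finset.card_singleton, one_mul,
      Fintype.card_piFinset]
    have : ∀ i : Fin n, (if i ∈ A then ({false} : Finset Bool) else Finset.univ).card
        = if i ∈ A then 1 else 2 := by
      intro i; by_cases hi : i ∈ A <;> simp [hi]
    rw [Finset.prod_congr rfl fun i _ => this i,
      ← Finset.prod_mul_prod_compl A (fun i => if i ∈ A then 1 else 2),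
      Finset.prod_congr rfl (fun i hi => if_pos hi),
      Finset.prod_congr rfl (fun i (hi : i ∈ Aᶜ) => if_neg (Finset.mem_compl.mp hi)),
      Finset.prod_const_one, one_mul, Finset.prod_const, Finset.card_compl,
      Fintype.card_fin, hA.2]
  rw [Finset.sum_congr rfl hfib, Finset.sum_const, smul_eq_mul]
  congr 1
  rw [show (Finset.univ.filter fun A : Finset (Fin n) => A.card = m)
      = Finset.powersetCard m (Finset.univ : Finset (Fin n)) by
    rw [Finset.powersetCard_eq_filter, Finset.powerset_univ],
    Finset.card_powersetCard, Finset.card_univ, Fintype.card_fin]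

end SP7

namespace SP8
open SP SP2 SP3 SP4 SP5 SP6 SP7

lemma Fmap_eq' {n m : ℕ} (hmn : m ≤ n) (βε : Equiv.Perm (Fin n) × (Fin n → Bool)) :
    Fmap hmn βε = ((headSet hmn βε.1, Fsig hmn βε.1 βε.2),
      (stdPerm hmn βε.1, fun i => βε.2 (Fin.castLE hmn i))) := rfl

lemma main_card {n m : ℕ} (hmn : m < n) (I' : Finset ℕ) (hI' : ∀ i ∈ I', i < m) :
    ((Finset.univ : Finset (Equiv.Perm (Fin n) × (Fin n → Bool))).filter fun βε =>
      descSetB n βε.1 βε.2 = insert m I' ∨ descSetB n βε.1 βε.2 = I').card =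
    (((Finset.univ : Finset (Finset (Fin n) × (Fin n → Bool))).filter fun Aσ =>
        Aσ.1.card = m ∧ ∀ a ∈ Aσ.1, Aσ.2 a = false) ×ˢ
      ((Finset.univ : Finset (Equiv.Perm (Fin m) × (Fin m → Bool))).filter fun y =>
        descSetB m y.1 y.2 = I')).card := by
  classical
  have hmn' : m ≤ n := le_of_lt hmn
  refine Finset.card_bij' (fun βε _ => Fmap hmn' βε)
    (fun y hy => Gmap hmn' y.1.1
      ((Finset.mem_filter.mp (Finset.mem_product.mp hy).1).2.1) y.1.2 y.2.1 y.2.2)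
    ?_ ?_ ?_ ?_
  · intro βε hβε
    obtain ⟨hdlt, hdgt⟩ := (src_iff hmn I' hI' βε.1 βε.2).mp (Finset.mem_filter.mp hβε).2
    show Fmap hmn' βε ∈ _
    rw [Fmap_eq', Finset.mem_product]
    constructor
    · rw [Finset.mem_filter]
      refine ⟨Finset.mem_univ _, card_headSet hmn' βε.1, fun a ha => ?_⟩
      show (if a ∈ headSet hmn' βε.1 then false else βε.2 (βε.1.symm a)) = false
      rw [if_pos ha]
    · rw [Finset.mem_filter]
      refine ⟨Finset.mem_univ _, ?_⟩
      rw [descSetB_eq_iff _ _ I' hI']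
      intro i him
      rw [mem_descSetB_stdPerm_iff hmn' βε.1 βε.2 i him]
      exact hdlt i him
  · intro y hy
    obtain ⟨hy1, hy2⟩ := Finset.mem_product.mp hy
    have hdes := (Finset.mem_filter.mp hy2).2
    rw [Finset.mem_filter]
    refine ⟨Finset.mem_univ _, (src_iff hmn I' hI' _ _).mpr ⟨?_, ?_⟩⟩
    · intro i him
      rw [mem_descSetB_Gmap_lt i him, hdes]
    · intro i h1 h2
      exact not_mem_descSetB_Gmap_gt i h1 h2
  · intro βε hβε
    obtain ⟨hdlt, hdgt⟩ := (src_iff hmn I' hI' βε.1 βε.2).mp (Finset.mem_filter.mp hβε).2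
    exact GF_eq hmn' βε.1 βε.2 hdgt
  · intro y hy
    obtain ⟨hy1, hy2⟩ := Finset.mem_product.mp hy
    have hσ := (Finset.mem_filter.mp hy1).2.2
    exact FG_eq hmn' y.1.1 _ y.1.2 y.2.1 y.2.2 hσ

end SP8


/-- Theorem 5.1: for nonempty `I` of nonnegative integers with max `m` and
`n > m`, `d_B(I;n) = C(n,m) 2^{n−m} d_B(I⁻;m) − d_B(I⁻;n)`. -/
theorem stmt_17 (I : Finset ℕ) (hne : I.Nonempty)
    (m : ℕ) (hm : m = I.sup id) (n : ℕ) (hn : m < n) :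
    (dB I n : ℤ) =
      (n.choose m : ℤ) * 2 ^ (n - m) * dB (I.erase m) m - dB (I.erase m) n := by
  classical
  obtain ⟨b, hb, hsup⟩ := Finset.exists_mem_eq_sup I hne id
  have hmI : m ∈ I := by rw [hm, hsup]; exact hb
  have hI' : ∀ i ∈ I.erase m, i < m := by
    intro i hi
    have h1 := Finset.mem_of_mem_erase hi
    have h2 := Finset.ne_of_mem_erase hi
    have h3 : id i ≤ I.sup id := Finset.le_sup h1
    rw [← hm] at h3
    simp only [id] at h3
    omega
  have hins : insert m (I.erase m) = I := Finset.insert_erase hmI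
  have hcard := SP8.main_card hn (I.erase m) hI'
  rw [Finset.filter_or, Finset.card_union_of_disjoint, Finset.card_product,
    SP7.card_pairs (le_of_lt hn), hins] at hcard
  · have h1 : dB I n + dB (I.erase m) n = n.choose m * 2 ^ (n - m) * dB (I.erase m) m := by
      rw [dB, dB, dB]
      exact hcard
    have h2 := congrArg (Nat.cast : ℕ → ℤ) h1
    push_cast at h2
    linarith
  · rw [Finset.disjoint_left]
    intro x hx1 hx2
    have e1 := (Finset.mem_filter.mp hx1).2
    have e2 := (Finset.mem_filter.mp hx2).2
    rw [e1] at e2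
    have : m ∈ I.erase m := e2 ▸ Finset.mem_insert_self m (I.erase m)
    exact absurd (hI' m this) (lt_irrefl m)
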